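/- Let f : ℂ → ℂ be holomorphic near 0 with f(0) = 0 and λ := f'(0) satisfying 0 < |λ| < 1. Then the limit φ(z) = lim_{n→∞} fⁿ(z)/λⁿ exists for all z in a sufficiently small neighborhood of 0, the convergence is uniform on that neighborhood, φ is holomorphic with φ(0) = 0 and φ'(0) = 1, and φ(f(z)) = λ·φ(z) for z near 0. -/

import Mathlib

open Filter Topology

/-- Koenigs linearization: if `f` is holomorphic near `0` with `f 0 = 0` and
multiplier `λ = f' 0` satisfying `0 < |λ| < 1`, then the rescaled iterates
`fⁿ(z)/λⁿ` converge uniformly on a neighbourhood of `0` to a holomorphic map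
`φ` with `φ 0 = 0`, `φ' 0 = 1` and `φ ∘ f = λ·φ` near `0`. -/
theorem koenigs_linearization
    (f : ℂ → ℂ) (hf : AnalyticAt ℂ f 0) (h0 : f 0 = 0)
    (hl0 : 0 < ‖deriv f 0‖) (hl1 : ‖deriv f 0‖ < 1) :
    ∃ U ∈ 𝓝 (0 : ℂ), ∃ φ : ℂ → ℂ,
      TendstoUniformlyOn (fun n z => f^[n] z / (deriv f 0) ^ n) φ atTop U ∧
      (∀ z ∈ U, AnalyticAt ℂ φ z) ∧
      φ 0 = 0 ∧ deriv φ 0 = 1 ∧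
      ∀ᶠ z in 𝓝 (0 : ℂ), φ (f z) = deriv f 0 * φ z := by
  set l : ℂ := deriv f 0 with hldef
  set a : ℝ := ‖l‖ with hadef
  have ha0 : 0 < a := hl0
  have ha1 : a < 1 := hl1
  have hlne : l ≠ 0 := norm_ne_zero_iff.mp ha0.ne' 
  have hanorm : a = ‖l‖ := rfl
  -- the auxiliary constant c with a < c < √a < 1
  set c : ℝ := (a + Real.sqrt a) / 2 with hcdef
  have hsa : a < Real.sqrt a := by
    have h := Real.sqrt_lt_sqrt (sq_nonneg a) (show a ^ 2 < a by nlinarith)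
    rwa [Real.sqrt_sq ha0.le] at h
  have hac : a < c := by simp only [hcdef]; linarith
  have hcs : c < Real.sqrt a := by simp only [hcdef]; linarith
  have hc0 : 0 < c := lt_trans ha0 hac
  have hsa1 : Real.sqrt a < 1 := by
    rw [show (1:ℝ) = Real.sqrt 1 by simp]
    exact Real.sqrt_lt_sqrt ha0.le ha1
  have hc1 : c < 1 := hcs.trans hsa1
  have hc2a : c ^ 2 < a := by
    have := Real.sq_sqrt ha0.le
    nlinarith [Real.sqrt_nonneg a]
  -- quadratic bound near 0
  obtain ⟨p, hp⟩ := hf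
  have hps : ∀ y : ℂ, p.partialSum 2 y = l * y := by
    intro y
    have hc0' : p.coeff 0 = 0 := by
      have h := hp.coeff_zero (fun _ => (1:ℂ))
      rw [h0] at h
      exact h
    have hc1' : p.coeff 1 = l := (hp.deriv).symm
    rw [FormalMultilinearSeries.partialSum, Finset.sum_range_succ, Finset.sum_range_one,
      FormalMultilinearSeries.apply_eq_pow_smul_coeff,
      FormalMultilinearSeries.apply_eq_pow_smul_coeff, hc0', hc1', smul_eq_mul, smul_eq_mul]
    ring
  have hO : (fun y : ℂ => f y - l * y) =O[𝓝 0] fun y : ℂ => ‖y‖ ^ 2 := by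
    have h2 := hp.isBigO_sub_partialSum_pow 2
    simpa [hps] using h2
  obtain ⟨K₀, hK₀⟩ := hO.isBigOWith
  set K : ℝ := max K₀ 1 with hKdef
  have hK0 : 0 < K := lt_of_lt_of_le one_pos (le_max_right _ _)
  have hKbound : ∀ᶠ y in 𝓝 (0:ℂ), ‖f y - l * y‖ ≤ K * ‖y‖ ^ 2 := by
    filter_upwards [hK₀.bound] with y hy
    calc ‖f y - l * y‖ ≤ K₀ * ‖(‖y‖ ^ 2)‖ := hy
      _ ≤ K * ‖y‖ ^ 2 := by
          rw [Real.norm_of_nonneg (by positivity)]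
          gcongr
          exact le_max_left _ _
  have hdiffev : ∀ᶠ y in 𝓝 (0:ℂ), DifferentiableAt ℂ f y := by
    filter_upwards [hp.analyticAt.eventually_analyticAt] with y hy
    exact hy.differentiableAt
  obtain ⟨r₁, hr₁0, hr₁⟩ := Metric.eventually_nhds_iff.mp (hKbound.and hdiffev)
  -- the radius r
  set r : ℝ := min (r₁ / 2) ((c - a) / K) with hrdef
  have hr0 : 0 < r := lt_min (by linarith) (div_pos (by linarith) hK0)
  have hrr₁ : r < r₁ := lt_of_le_of_lt (min_le_left _ _) (by linarith)
  have hrK : K * r ≤ c - a := by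
    have := min_le_right (r₁ / 2) ((c - a) / K)
    rw [← hrdef] at this
    calc K * r ≤ K * ((c - a) / K) := by gcongr
      _ = c - a := by field_simp
  clear_value a c K r
  set U : Set ℂ := Metric.ball (0:ℂ) r with hUdef
  have hU : U ∈ 𝓝 (0:ℂ) := Metric.ball_mem_nhds _ hr0
  have hmem : ∀ z : ℂ, z ∈ U ↔ ‖z‖ < r := by
    intro z; simp [hUdef, Metric.mem_ball, dist_zero_right]
  have hbnd : ∀ z ∈ U, ‖f z - l * z‖ ≤ K * ‖z‖ ^ 2 ∧ DifferentiableAt ℂ f z := by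
    intro z hz
    exact hr₁ (by simpa [dist_zero_right] using (hmem z).mp hz |>.trans hrr₁)
  -- contraction estimate
  have hstep : ∀ z ∈ U, ‖f z‖ ≤ c * ‖z‖ ∧ f z ∈ U := by
    intro z hz
    have hzr : ‖z‖ < r := (hmem z).mp hz
    have h1 : ‖f z‖ ≤ c * ‖z‖ := by
      have hb := (hbnd z hz).1
      have h2 : K * ‖z‖ ≤ c - a := by
        refine le_trans ?_ hrK
        gcongr <;> exact hzr.le
      have h3 : ‖f z‖ ≤ ‖f z - l * z‖ + ‖l * z‖ := by
        calc ‖f z‖ = ‖f z - l * z + l * z‖ := by rw [sub_add_cancel]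
          _ ≤ ‖f z - l * z‖ + ‖l * z‖ := norm_add_le _ _
      have h4 : ‖l * z‖ = a * ‖z‖ := by rw [norm_mul, hanorm]
      nlinarith [norm_nonneg z, sq_nonneg (‖z‖)]
    refine ⟨h1, (hmem _).mpr ?_⟩
    have : c * ‖z‖ < r := by nlinarith
    linarith
  have hiter : ∀ z ∈ U, ∀ n : ℕ, ‖f^[n] z‖ ≤ c ^ n * ‖z‖ ∧ f^[n] z ∈ U := by
    intro z hz n
    induction n with
    | zero => simpa using hz
    | succ n ih =>
      rw [Function.iterate_succ_apply']
      obtain ⟨ih1, ih2⟩ := ih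
      obtain ⟨h1, h2⟩ := hstep _ ih2
      refine ⟨?_, h2⟩
      calc ‖f (f^[n] z)‖ ≤ c * ‖f^[n] z‖ := h1
        _ ≤ c * (c ^ n * ‖z‖) := by gcongr
        _ = c ^ (n + 1) * ‖z‖ := by ring
  -- the approximating sequence
  set F : ℕ → ℂ → ℂ := fun n z => f^[n] z / l ^ n with hFdef
  set C : ℝ := K * r ^ 2 / a with hCdef
  set q : ℝ := c ^ 2 / a with hqdef
  have hq0 : 0 ≤ q := by positivity
  have hq1 : q < 1 := (div_lt_one ha0).mpr hc2a
  clear_value C q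
  have hd : ∀ z ∈ U, ∀ n : ℕ, dist (F n z) (F (n + 1) z) ≤ C * q ^ n := by
    intro z hz n
    obtain ⟨hn1, hn2⟩ := hiter z hz n
    have hzr : ‖z‖ < r := (hmem z).mp hz
    have key : F (n + 1) z - F n z = (f (f^[n] z) - l * f^[n] z) / l ^ (n + 1) := by
      simp only [hFdef, Function.iterate_succ_apply']
      have hln : l ^ n ≠ 0 := pow_ne_zero n hlne
      have hln1 : l ^ (n + 1) ≠ 0 := pow_ne_zero _ hlne
      field_simp
      ring
    rw [dist_comm, dist_eq_norm, key]
    have ha' : (0:ℝ) < a ^ (n + 1) := pow_pos ha0 _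
    calc ‖(f (f^[n] z) - l * f^[n] z) / l ^ (n + 1)‖
        = ‖f (f^[n] z) - l * f^[n] z‖ / a ^ (n + 1) := by
          rw [norm_div, norm_pow, ← hanorm]
      _ ≤ K * ‖f^[n] z‖ ^ 2 / a ^ (n + 1) := by
          gcongr
          exact (hbnd _ hn2).1
      _ ≤ K * (c ^ n * r) ^ 2 / a ^ (n + 1) := by
          gcongr
          calc ‖f^[n] z‖ ≤ c ^ n * ‖z‖ := hn1
            _ ≤ c ^ n * r := by gcongr <;> exact hzr.le
      _ = C * q ^ n := by
          simp only [hCdef, hqdef]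
          rw [div_pow]
          field_simp
          ring
  -- pointwise limits
  have hcauchy : ∀ z ∈ U, CauchySeq (fun n => F n z) :=
    fun z hz => cauchySeq_of_le_geometric q C hq1 (hd z hz)
  set φ : ℂ → ℂ := fun z => limUnder atTop (fun n => F n z) with hφdef
  have hptw : ∀ z ∈ U, Tendsto (fun n => F n z) atTop (𝓝 (φ z)) :=
    fun z hz => (hcauchy z hz).tendsto_limUnder
  have hbound : ∀ z ∈ U, ∀ n : ℕ, dist (F n z) (φ z) ≤ C * q ^ n / (1 - q) :=
    fun z hz n => dist_le_of_le_geometric_of_tendsto q C hq1 (hd z hz) (hptw z hz) n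
  -- uniform convergence
  have hTU : TendstoUniformlyOn F φ atTop U := by
    rw [Metric.tendstoUniformlyOn_iff]
    intro ε hε
    have htend : Tendsto (fun n : ℕ => C * q ^ n / (1 - q)) atTop (𝓝 0) := by
      have := (tendsto_pow_atTop_nhds_zero_of_lt_one hq0 hq1).const_mul C
      simpa using this.div_const (1 - q)
    filter_upwards [htend.eventually (gt_mem_nhds hε)] with n hn z hz
    calc dist (φ z) (F n z) = dist (F n z) (φ z) := dist_comm _ _
      _ ≤ C * q ^ n / (1 - q) := hbound z hz n
      _ < ε := hn
  -- differentiability of the approximants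
  have hFdiffAt : ∀ n : ℕ, ∀ z ∈ U, DifferentiableAt ℂ (f^[n]) z := by
    intro n
    induction n with
    | zero => intro z hz; simpa using differentiableAt_id'
    | succ n ih =>
      intro z hz
      rw [Function.iterate_succ']
      exact DifferentiableAt.comp z ((hbnd _ (hiter z hz n).2).2) (ih z hz)
  have hFdiff : ∀ n : ℕ, DifferentiableOn ℂ (F n) U :=
    fun n z hz => ((hFdiffAt n z hz).div_const _).differentiableWithinAt
  have hopen : IsOpen U := Metric.isOpen_ball
  have hTLU := hTU.tendstoLocallyUniformlyOn
  have hφdiff : DifferentiableOn ℂ φ U :=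
    hTLU.differentiableOn (Eventually.of_forall hFdiff) hopen
  have h0U : (0:ℂ) ∈ U := Metric.mem_ball_self hr0
  -- φ 0 = 0
  have hφ0 : φ 0 = 0 := by
    have h1 : Tendsto (fun n => F n 0) atTop (𝓝 (φ 0)) := hptw 0 h0U
    have h2 : (fun n => F n 0) = fun _ => (0:ℂ) := by
      funext n
      simp [hFdef, Function.iterate_fixed h0]
    rw [h2] at h1
    exact tendsto_nhds_unique h1 tendsto_const_nhds
  -- deriv of the iterates
  have hder : ∀ n : ℕ, HasDerivAt (f^[n]) (l ^ n) 0 := by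
    intro n
    induction n with
    | zero => simpa using hasDerivAt_id (0:ℂ)
    | succ n ih =>
      rw [Function.iterate_succ']
      have hfd : HasDerivAt f l (f^[n] 0) := by
        rw [Function.iterate_fixed h0]
        exact ((hbnd 0 h0U).2).hasDerivAt
      have := HasDerivAt.comp (0:ℂ) hfd ih
      simpa [pow_succ, mul_comm] using this
  -- deriv φ 0 = 1
  have hdφ : deriv φ 0 = 1 := by
    have hdTLU := hTLU.deriv (Eventually.of_forall hFdiff) hopen
    have hdat : Tendsto (fun n => deriv (F n) 0) atTop (𝓝 (deriv φ 0)) :=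
      hdTLU.tendsto_at h0U
    have heq : (fun n => deriv (F n) 0) = fun _ => (1:ℂ) := by
      funext n
      have h1 : deriv (fun z => f^[n] z / l ^ n) 0 = l ^ n / l ^ n :=
        ((hder n).div_const (l ^ n)).deriv
      simpa [hFdef, div_self (pow_ne_zero n hlne)] using h1
    rw [heq] at hdat
    exact tendsto_nhds_unique hdat tendsto_const_nhds
  refine ⟨U, hU, φ, hTU, fun z hz => hφdiff.analyticAt (hopen.mem_nhds hz), hφ0, hdφ, ?_⟩
  -- functional equation
  filter_upwards [hU] with z hz
  have hfz : f z ∈ U := (hstep z hz).2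
  have h1 : Tendsto (fun n => F n (f z)) atTop (𝓝 (φ (f z))) := hptw _ hfz
  have h2 : Tendsto (fun n => l * F (n + 1) z) atTop (𝓝 (l * φ z)) :=
    ((hptw z hz).comp (tendsto_add_atTop_nat 1)).const_mul l
  have heq : (fun n => F n (f z)) = fun n => l * F (n + 1) z := by
    funext n
    simp only [hFdef, ← Function.iterate_succ_apply]
    rw [pow_succ]
    field_simp
  rw [heq] at h1
  exact tendsto_nhds_unique h1 h2
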